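/- The function H(x,y) = (x² + y²)² / (a x⁴ - 1) is a first integral of the system ẋ = -y + a y x⁴, ẏ = x + a x³ y² on the set where a x⁴ ≠ 1. -/

import Mathlib

/-- H(x,y) = (x²+y²)²/(ax⁴-1) is a first integral of
ẋ = -y+ayx⁴, ẏ = x+ax³y² wherever ax⁴ ≠ 1. -/
theorem stmt_6 (a : ℝ) :
    ∀ x y : ℝ, a * x ^ 4 ≠ 1 →
      (-y + a * y * x ^ 4) *
        deriv (fun x' : ℝ => (x' ^ 2 + y ^ 2) ^ 2 / (a * x' ^ 4 - 1)) x
      + (x + a * x ^ 3 * y ^ 2) *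
        deriv (fun y' : ℝ => (x ^ 2 + y' ^ 2) ^ 2 / (a * x ^ 4 - 1)) y = 0 := by
  intro x y h
  have hd : a * x ^ 4 - 1 ≠ 0 := sub_ne_zero.mpr h
  have hu : HasDerivAt (fun x' : ℝ => (x' ^ 2 + y ^ 2) ^ 2)
      (2 * (x ^ 2 + y ^ 2) * (2 * x)) x := by
    have : HasDerivAt (fun x' : ℝ => x' ^ 2 + y ^ 2) (2 * x) x := by
      simpa using ((hasDerivAt_pow 2 x).add_const (y ^ 2))
    simpa [mul_comm, mul_assoc, mul_left_comm] using this.fun_pow 2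
  have hv : HasDerivAt (fun x' : ℝ => a * x' ^ 4 - 1) (a * (4 * x ^ 3)) x := by
    simpa using (((hasDerivAt_pow 4 x).const_mul a).sub_const 1)
  have h1 := (hu.fun_div hv hd).deriv
  have hu2 : HasDerivAt (fun y' : ℝ => (x ^ 2 + y' ^ 2) ^ 2)
      (2 * (x ^ 2 + y ^ 2) * (2 * y)) y := by
    have : HasDerivAt (fun y' : ℝ => x ^ 2 + y' ^ 2) (2 * y) y := by
      simpa using ((hasDerivAt_pow 2 y).const_add (x ^ 2))
    simpa [mul_comm, mul_assoc, mul_left_comm] using this.fun_pow 2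
  have h2 := (hu2.div_const (a * x ^ 4 - 1)).deriv
  rw [h1, h2]
  field_simp
  ring
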